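/- Let μ be an n-dimensional measure on ℝ^d (i.e., μ(B(x,r)) ≤ C₀ r^n for all x, r), and let 0 < α ≤ 1. For an assignment B ↦ f_B of numbers to balls, the condition |f_B - f_U| ≤ C radius(U)^α for all balls B ⊂ U is equivalent (with comparable constants) to |f_B - f_U| ≤ C' K_{B,U} radius(U)^α for all balls B ⊂ U, where K_{B,U} = 1 + ∑_{j=1}^{N_{B,U}} μ(2^j B)/(2^j radius(B))^n and N_{B,U} is the first integer k with 2^k radius(B) ≥ radius(U). -/
import Mathlib


open MeasureTheory Metric
open scoped ENNReal

/-- The first integer `k` with `2^k r ≥ R`. -/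
noncomputable def NBU (r R : ℝ) : ℕ := sInf {k : ℕ | R ≤ 2 ^ k * r}

/-- Tolsa's constant `K_{B,U}` for concentric-dyadic chains from `B = B(x,r)` towards a
ball of radius `R`. -/
noncomputable def KBU {d : ℕ} (μ : Measure (EuclideanSpace ℝ (Fin d))) (n : ℝ)
    (x : EuclideanSpace ℝ (Fin d)) (r R : ℝ) : ℝ :=
  1 + ∑ j ∈ Finset.Icc 1 (NBU r R),
        (μ (ball x (2 ^ j * r))).toReal / ((2 : ℝ) ^ j * r) ^ n

lemma NBU_le' {r R : ℝ} {k : ℕ} (h : R ≤ 2 ^ k * r) : NBU r R ≤ k := Nat.sInf_le h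

lemma NBU_spec' {r R : ℝ} (hr : 0 < r) : R ≤ 2 ^ (NBU r R) * r := by
  have hne : {k : ℕ | R ≤ 2 ^ k * r}.Nonempty := by
    obtain ⟨k, hk⟩ := pow_unbounded_of_one_lt (R / r) (one_lt_two (α := ℝ))
    exact ⟨k, (div_le_iff₀ hr).mp hk.le⟩
  exact Nat.sInf_mem hne

lemma KBU_ge_one' {d : ℕ} (μ : Measure (EuclideanSpace ℝ (Fin d))) (n : ℝ)
    (x : EuclideanSpace ℝ (Fin d)) {r : ℝ} (R : ℝ) (hr : 0 < r) :
    1 ≤ KBU μ n x r R := by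
  unfold KBU
  have : (0:ℝ) ≤ ∑ j ∈ Finset.Icc 1 (NBU r R),
      (μ (ball x (2 ^ j * r))).toReal / ((2 : ℝ) ^ j * r) ^ n := by
    refine Finset.sum_nonneg fun j _ => div_nonneg ENNReal.toReal_nonneg ?_
    exact Real.rpow_nonneg (by positivity) n
  linarith

lemma KBU_le' {d : ℕ} (μ : Measure (EuclideanSpace ℝ (Fin d))) (n C₀ : ℝ) (hC₀ : 0 < C₀)
    (hgrowth : ∀ (x : EuclideanSpace ℝ (Fin d)) (r : ℝ), 0 < r →
      μ (ball x r) ≤ ENNReal.ofReal (C₀ * r ^ n))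
    (x : EuclideanSpace ℝ (Fin d)) {r R : ℝ} (hr : 0 < r) {m : ℕ} (hm : NBU r R ≤ m) :
    KBU μ n x r R ≤ 1 + C₀ * m := by
  unfold KBU
  have hle : ∀ j ∈ Finset.Icc 1 (NBU r R),
      (μ (ball x (2 ^ j * r))).toReal / ((2 : ℝ) ^ j * r) ^ n ≤ C₀ := by
    intro j _
    have hρ : (0:ℝ) < 2 ^ j * r := by positivity
    have hpow : (0:ℝ) < ((2:ℝ) ^ j * r) ^ n := Real.rpow_pos_of_pos hρ n
    rw [div_le_iff₀ hpow]
    have h2 : (μ (ball x (2 ^ j * r))).toReal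
        ≤ (ENNReal.ofReal (C₀ * ((2:ℝ) ^ j * r) ^ n)).toReal :=
      ENNReal.toReal_mono ENNReal.ofReal_ne_top (hgrowth x _ hρ)
    rwa [ENNReal.toReal_ofReal (mul_nonneg hC₀.le hpow.le)] at h2
  have hsum : ∑ j ∈ Finset.Icc 1 (NBU r R),
      (μ (ball x (2 ^ j * r))).toReal / ((2 : ℝ) ^ j * r) ^ n
      ≤ ∑ _j ∈ Finset.Icc 1 (NBU r R), C₀ := Finset.sum_le_sum hle
  rw [Finset.sum_const, Nat.card_Icc, nsmul_eq_mul] at hsum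
  simp only [Nat.add_sub_cancel] at hsum
  have hcast : ((NBU r R : ℝ)) * C₀ ≤ (m : ℝ) * C₀ := by
    have : ((NBU r R : ℝ)) ≤ (m : ℝ) := by exact_mod_cast hm
    nlinarith
  nlinarith

lemma radius_le_of_ball_subset' {d : ℕ} (hd : 0 < d) {x y : EuclideanSpace ℝ (Fin d)}
    {r R : ℝ} (hr : 0 < r) (h : ball x r ⊆ ball y R) : r ≤ R := by
  set u : EuclideanSpace ℝ (Fin d) := EuclideanSpace.single (⟨0, hd⟩ : Fin d) (1:ℝ) with hu_def
  have hu : ‖u‖ = 1 := by simp [hu_def, EuclideanSpace.norm_single]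
  have hR0 : 0 < R := lt_of_le_of_lt dist_nonneg (h (mem_ball_self hr))
  refine le_of_forall_lt fun c hc => ?_
  rcases le_or_gt c 0 with h0 | h0
  · linarith
  · have hmem : ∀ s : ℝ, |s| = c → x + s • u ∈ ball x r := by
      intro s hs
      rw [mem_ball, dist_eq_norm]
      have heq : x + s • u - x = s • u := by abel
      rw [heq, norm_smul, hu, mul_one, Real.norm_eq_abs, hs]
      exact hc
    have d1 : dist (x + c • u) y < R := h (hmem c (abs_of_pos h0))
    have d2 : dist (x + (-c) • u) y < R := h (hmem (-c) (by rw [abs_neg, abs_of_pos h0]))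
    have hdd : dist (x + c • u) (x + (-c) • u) = 2 * c := by
      rw [dist_eq_norm]
      have heq : x + c • u - (x + (-c) • u) = (2 * c) • u := by module
      rw [heq, norm_smul, hu, mul_one, Real.norm_eq_abs, abs_of_pos (by linarith)]
    have htri := dist_triangle (x + c • u) y (x + (-c) • u)
    rw [dist_comm y, hdd] at htri
    linarith

set_option maxHeartbeats 1000000 in
/-- For an `n`-dimensional measure, the conditions `|f_B - f_U| ≤ C (radius U)^α` and
`|f_B - f_U| ≤ C K_{B,U} (radius U)^α` (over all pairs of balls `B ⊆ U`) are equivalent,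
with comparable constants. -/
theorem stmt8 {d : ℕ} (μ : Measure (EuclideanSpace ℝ (Fin d))) [IsLocallyFiniteMeasure μ]
    (n C₀ : ℝ) (hn : 0 < n) (hnd : n ≤ d) (hC₀ : 0 < C₀)
    (hgrowth : ∀ (x : EuclideanSpace ℝ (Fin d)) (r : ℝ), 0 < r →
      μ (ball x r) ≤ ENNReal.ofReal (C₀ * r ^ n))
    (α : ℝ) (hα : 0 < α) (hα1 : α ≤ 1) :
    ∃ A : ℝ, 0 < A ∧
      ∀ (fB : EuclideanSpace ℝ (Fin d) → ℝ → ℝ) (C : ℝ), 0 ≤ C →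
        ((∀ (x : EuclideanSpace ℝ (Fin d)) (r : ℝ) (y : EuclideanSpace ℝ (Fin d)) (R : ℝ),
            0 < r → 0 < R → ball x r ⊆ ball y R →
              |fB x r - fB y R| ≤ C * R ^ α) →
          (∀ (x : EuclideanSpace ℝ (Fin d)) (r : ℝ) (y : EuclideanSpace ℝ (Fin d)) (R : ℝ),
            0 < r → 0 < R → ball x r ⊆ ball y R →
              |fB x r - fB y R| ≤ C * KBU μ n x r R * R ^ α)) ∧
        ((∀ (x : EuclideanSpace ℝ (Fin d)) (r : ℝ) (y : EuclideanSpace ℝ (Fin d)) (R : ℝ),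
            0 < r → 0 < R → ball x r ⊆ ball y R →
              |fB x r - fB y R| ≤ C * KBU μ n x r R * R ^ α) →
          (∀ (x : EuclideanSpace ℝ (Fin d)) (r : ℝ) (y : EuclideanSpace ℝ (Fin d)) (R : ℝ),
            0 < r → 0 < R → ball x r ⊆ ball y R →
              |fB x r - fB y R| ≤ A * C * R ^ α)) := by
  have hd : 0 < d := by
    have : (0:ℝ) < (d:ℝ) := lt_of_lt_of_le hn hnd
    exact_mod_cast this
  set q : ℝ := 2 ^ α with hq_def
  have hq : 1 < q := by
    rw [hq_def]
    exact (Real.one_lt_rpow_iff_of_pos two_pos).2 (Or.inl ⟨one_lt_two, hα⟩)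
  have hq1 : 0 < q - 1 := by linarith
  have hA : 0 < (1 + 2 * C₀) * (4 / (q - 1) + 6) := by positivity
  refine ⟨(1 + 2 * C₀) * (4 / (q - 1) + 6), hA, fun fB C hC => ⟨?_, ?_⟩⟩
  · intro H x r y R hr hR hsub
    have h1 := H x r y R hr hR hsub
    have hk := KBU_ge_one' μ n x R hr
    have hRα : (0:ℝ) ≤ R ^ α := Real.rpow_nonneg hR.le α
    calc |fB x r - fB y R| ≤ C * R ^ α := h1
      _ = C * 1 * R ^ α := by ring
      _ ≤ C * KBU μ n x r R * R ^ α := by gcongr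
  · intro H x r y R hr hR hsub
    set D : ℝ := C * (1 + 2 * C₀) with hD_def
    have hD : 0 ≤ D := by positivity
    have hrR : r ≤ R := radius_le_of_ball_subset' hd hr hsub
    have hxy : dist x y < R := hsub (mem_ball_self hr)
    set N : ℕ := NBU r R with hN_def
    have hN1 : R ≤ 2 ^ N * r := NBU_spec' hr
    have hN2 : 2 ^ N * r ≤ 2 * R := by
      rcases Nat.eq_zero_or_pos N with h0 | hpos
      · rw [h0]; norm_num; linarith
      · obtain ⟨m, hm'⟩ : ∃ m, N = m + 1 := ⟨N - 1, (Nat.succ_pred_eq_of_pos hpos).symm⟩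
        have hm : m ∉ {k : ℕ | R ≤ 2 ^ k * r} := by
          rw [hN_def] at hm'
          have hmlt : m < NBU r R := by omega
          exact Nat.notMem_of_lt_sInf hmlt
        have hlt : ¬ (R ≤ 2 ^ m * r) := hm
        push_neg at hlt
        have heq : (2:ℝ) ^ N * r = 2 * ((2:ℝ) ^ m * r) := by rw [hm']; ring
        rw [heq]
        linarith
    have hKstep : ∀ (z : EuclideanSpace ℝ (Fin d)) (ρ σ : ℝ), 0 < ρ → σ ≤ 4 * ρ →
        KBU μ n z ρ σ ≤ 1 + 2 * C₀ := by
      intro z ρ σ hρ hσ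
      have hNle : NBU ρ σ ≤ 2 := NBU_le' (by norm_num; linarith)
      have h := KBU_le' μ n C₀ hC₀ hgrowth z hρ hNle
      norm_num at h
      linarith
    have hpowpos : ∀ m : ℕ, (0:ℝ) < 2 ^ m * r := fun m => by positivity
    have key : ∀ m : ℕ, |fB x r - fB x (2 ^ m * r)|
        ≤ D * ∑ j ∈ Finset.range m, ((2:ℝ) ^ (j+1) * r) ^ α := by
      intro m
      induction m with
      | zero => simp
      | succ m ih =>
        have hsub' : ball x ((2:ℝ) ^ m * r) ⊆ ball x ((2:ℝ) ^ (m+1) * r) := by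
          apply ball_subset_ball
          have : (2:ℝ) ^ m ≤ 2 ^ (m+1) := by
            apply pow_le_pow_right₀ (by norm_num) (Nat.le_succ m)
          nlinarith
        have hK : KBU μ n x ((2:ℝ) ^ m * r) ((2:ℝ) ^ (m+1) * r) ≤ 1 + 2 * C₀ := by
          apply hKstep x _ _ (hpowpos m)
          have heq : (2:ℝ) ^ (m+1) = 2 * 2 ^ m := by ring
          nlinarith [hpowpos m, pow_pos (two_pos (α := ℝ)) m]
        have hstep := H x ((2:ℝ) ^ m * r) x ((2:ℝ) ^ (m+1) * r)
          (hpowpos m) (hpowpos (m+1)) hsub'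
        have hRα : (0:ℝ) ≤ ((2:ℝ) ^ (m+1) * r) ^ α := Real.rpow_nonneg (hpowpos (m+1)).le α
        have hstep' : |fB x ((2:ℝ) ^ m * r) - fB x ((2:ℝ) ^ (m+1) * r)|
            ≤ D * ((2:ℝ) ^ (m+1) * r) ^ α := by
          calc |fB x ((2:ℝ) ^ m * r) - fB x ((2:ℝ) ^ (m+1) * r)|
              ≤ C * KBU μ n x ((2:ℝ) ^ m * r) ((2:ℝ) ^ (m+1) * r)
                  * ((2:ℝ) ^ (m+1) * r) ^ α := hstep
            _ ≤ C * (1 + 2 * C₀) * ((2:ℝ) ^ (m+1) * r) ^ α := by gcongr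
            _ = D * ((2:ℝ) ^ (m+1) * r) ^ α := by rw [hD_def]
        calc |fB x r - fB x (2 ^ (m+1) * r)|
            ≤ |fB x r - fB x (2 ^ m * r)| + |fB x (2 ^ m * r) - fB x (2 ^ (m+1) * r)| :=
              abs_sub_le _ _ _
          _ ≤ D * ∑ j ∈ Finset.range m, ((2:ℝ) ^ (j+1) * r) ^ α
              + D * ((2:ℝ) ^ (m+1) * r) ^ α := add_le_add ih hstep'
          _ = D * ∑ j ∈ Finset.range (m+1), ((2:ℝ) ^ (j+1) * r) ^ α := by
              rw [Finset.sum_range_succ]; ring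
    have hterm : ∀ j : ℕ, ((2:ℝ) ^ (j+1) * r) ^ α = r ^ α * q ^ (j+1) := by
      intro j
      rw [Real.mul_rpow (by positivity) hr.le, hq_def,
        ← Real.rpow_natCast (2:ℝ) (j+1), ← Real.rpow_natCast ((2:ℝ) ^ α) (j+1),
        ← Real.rpow_mul (by norm_num), ← Real.rpow_mul (by norm_num), mul_comm α]
      ring
    have hrα : (0:ℝ) ≤ r ^ α := Real.rpow_nonneg hr.le α
    have hsum : ∑ j ∈ Finset.range N, ((2:ℝ) ^ (j+1) * r) ^ α
        ≤ r ^ α * q ^ (N+1) / (q - 1) := by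
      have heq : ∑ j ∈ Finset.range N, ((2:ℝ) ^ (j+1) * r) ^ α
          = r ^ α * q * ∑ j ∈ Finset.range N, q ^ j := by
        rw [Finset.mul_sum]
        refine Finset.sum_congr rfl fun j _ => ?_
        rw [hterm j, pow_succ]; ring
      rw [heq, geom_sum_eq (by linarith : q ≠ 1) N]
      have hqN : (0:ℝ) < q ^ N := pow_pos (by linarith) N
      have hq0 : (0:ℝ) < q := by linarith
      have h1 : r ^ α * q * (q ^ N - 1) ≤ r ^ α * q ^ (N+1) := by
        have heq2 : q ^ (N+1) = q * q ^ N := by ring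
        nlinarith [mul_nonneg hrα hq0.le]
      calc r ^ α * q * ((q ^ N - 1) / (q - 1))
          = (r ^ α * q * (q ^ N - 1)) / (q - 1) := by ring
        _ ≤ (r ^ α * q ^ (N+1)) / (q - 1) := by gcongr
        _ = r ^ α * q ^ (N+1) / (q - 1) := by ring
    have hRα : (0:ℝ) ≤ R ^ α := Real.rpow_nonneg hR.le α
    have hT1 : |fB x r - fB x (2 ^ N * r)| ≤ D * (4 / (q - 1)) * R ^ α := by
      have h2 : r ^ α * q ^ (N+1) = ((2:ℝ) ^ (N+1) * r) ^ α := (hterm N).symm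
      have h3 : ((2:ℝ) ^ (N+1) * r) ^ α ≤ (4 * R) ^ α := by
        apply Real.rpow_le_rpow (by positivity) _ hα.le
        have heq : (2:ℝ) ^ (N+1) * r = 2 * (2 ^ N * r) := by ring
        rw [heq]; linarith
      have h4 : (4 * R) ^ α ≤ 4 * R ^ α := by
        rw [Real.mul_rpow (by norm_num) hR.le]
        have h5 : (4:ℝ) ^ α ≤ 4 ^ (1:ℝ) := Real.rpow_le_rpow_of_exponent_le (by norm_num) hα1
        rw [Real.rpow_one] at h5
        nlinarith
      calc |fB x r - fB x (2 ^ N * r)|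
          ≤ D * ∑ j ∈ Finset.range N, ((2:ℝ) ^ (j+1) * r) ^ α := key N
        _ ≤ D * (r ^ α * q ^ (N+1) / (q - 1)) := by gcongr
        _ = D * (((2:ℝ) ^ (N+1) * r) ^ α) / (q - 1) := by rw [← h2]; ring
        _ ≤ D * (4 * R ^ α) / (q - 1) := by gcongr; exact h3.trans h4
        _ = D * (4 / (q - 1)) * R ^ α := by ring
    have h3R : (0:ℝ) < 3 * R := by linarith
    have h3Rα : (3 * R) ^ α ≤ 3 * R ^ α := by
      rw [Real.mul_rpow (by norm_num) hR.le]
      have h5 : (3:ℝ) ^ α ≤ 3 ^ (1:ℝ) := Real.rpow_le_rpow_of_exponent_le (by norm_num) hα1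
      rw [Real.rpow_one] at h5
      nlinarith
    have hT2 : |fB x (2 ^ N * r) - fB y (3 * R)| ≤ D * (3 * R ^ α) := by
      have hsub2 : ball x ((2:ℝ) ^ N * r) ⊆ ball y (3 * R) :=
        ball_subset_ball' (by linarith [dist_nonneg (x := x) (y := y)])
      have hK : KBU μ n x ((2:ℝ) ^ N * r) (3 * R) ≤ 1 + 2 * C₀ :=
        hKstep x _ _ (hpowpos N) (by linarith)
      have h3Rα0 : (0:ℝ) ≤ (3 * R) ^ α := Real.rpow_nonneg h3R.le α
      calc |fB x (2 ^ N * r) - fB y (3 * R)|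
          ≤ C * KBU μ n x ((2:ℝ) ^ N * r) (3 * R) * (3 * R) ^ α :=
            H x _ y _ (hpowpos N) h3R hsub2
        _ ≤ C * (1 + 2 * C₀) * (3 * R) ^ α := by gcongr
        _ = D * (3 * R) ^ α := by rw [hD_def]
        _ ≤ D * (3 * R ^ α) := mul_le_mul_of_nonneg_left h3Rα hD
    have hT3 : |fB y (3 * R) - fB y R| ≤ D * (3 * R ^ α) := by
      have hsub3 : ball y R ⊆ ball y (3 * R) := ball_subset_ball (by linarith)
      have hK : KBU μ n y R (3 * R) ≤ 1 + 2 * C₀ :=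
        hKstep y _ _ hR (by linarith)
      have h3Rα0 : (0:ℝ) ≤ (3 * R) ^ α := Real.rpow_nonneg h3R.le α
      rw [abs_sub_comm]
      calc |fB y R - fB y (3 * R)|
          ≤ C * KBU μ n y R (3 * R) * (3 * R) ^ α := H y R y _ hR h3R hsub3
        _ ≤ C * (1 + 2 * C₀) * (3 * R) ^ α := by gcongr
        _ = D * (3 * R) ^ α := by rw [hD_def]
        _ ≤ D * (3 * R ^ α) := mul_le_mul_of_nonneg_left h3Rα hD
    calc |fB x r - fB y R|
        ≤ |fB x r - fB x (2 ^ N * r)| + |fB x (2 ^ N * r) - fB y R| := abs_sub_le _ _ _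
      _ ≤ |fB x r - fB x (2 ^ N * r)|
          + (|fB x (2 ^ N * r) - fB y (3 * R)| + |fB y (3 * R) - fB y R|) := by
          linarith [abs_sub_le (fB x (2 ^ N * r)) (fB y (3 * R)) (fB y R)]
      _ ≤ D * (4 / (q - 1)) * R ^ α + (D * (3 * R ^ α) + D * (3 * R ^ α)) := by
          linarith [hT1, hT2, hT3]
      _ = (1 + 2 * C₀) * (4 / (q - 1) + 6) * C * R ^ α := by rw [hD_def]; ring
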